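/- Let H be a complex Hilbert space and let S be a bounded linear operator on H with Cartesian decomposition S = A + iC such that A and C are positive. Then ‖S*S − SS*‖ ≤ (1/2)·(‖A‖² + ‖C‖²). -/
import Mathlib

open ContinuousLinearMap in
lemma positive_shift_norm_le {H : Type*} [NormedAddCommGroup H] [InnerProductSpace ℂ H]
    [CompleteSpace H] (P : H →L[ℂ] H) (hP : P.IsPositive) :
    ‖P - algebraMap ℝ (H →L[ℂ] H) (‖P‖ / 2)‖ ≤ ‖P‖ / 2 := by
  rcases subsingleton_or_nontrivial H with hH | hH
  · have : Subsingleton (H →L[ℂ] H) :=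
      ⟨fun a b => ContinuousLinearMap.ext fun x => Subsingleton.elim _ _⟩
    simp [Subsingleton.elim (P - algebraMap ℝ (H →L[ℂ] H) (‖P‖ / 2)) 0, Subsingleton.elim P 0]
  have hsa : IsSelfAdjoint P := hP.isSelfAdjoint
  have h0 : (0 : H →L[ℂ] H) ≤ P := (ContinuousLinearMap.nonneg_iff_isPositive P).mpr hP
  have : P - algebraMap ℝ (H →L[ℂ] H) (‖P‖ / 2) = cfc (fun x : ℝ => x - ‖P‖/2) P := by
    rw [cfc_sub _ _ P, cfc_id' ℝ P, cfc_const _ _ hsa]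
  rw [this]
  apply norm_cfc_le (by positivity)
  intro x hx
  have hx0 : 0 ≤ x := spectrum_nonneg_of_nonneg h0 hx
  have hx1 : x ≤ ‖P‖ := by
    have := spectrum.norm_le_norm_of_mem hx
    simpa [abs_of_nonneg hx0] using this
  rw [Real.norm_eq_abs, abs_le]
  constructor <;> linarith

/-- For `S = A + iC` with `A, C` positive,
`‖S*S − SS*‖ ≤ (1/2)(‖A‖² + ‖C‖²)`. -/
theorem self_commutator_norm_bound
    {H : Type*} [NormedAddCommGroup H] [InnerProductSpace ℂ H] [CompleteSpace H]
    (S A C : H →L[ℂ] H)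
    (hSdec : S = A + Complex.I • C)
    (hA : A.IsPositive) (hC : C.IsPositive) :
    ‖ContinuousLinearMap.adjoint S * S - S * ContinuousLinearMap.adjoint S‖ ≤
      (1 / 2) * (‖A‖ ^ 2 + ‖C‖ ^ 2) := by
  have hA' : star A = A := hA.isSelfAdjoint
  have hC' : star C = C := hC.isSelfAdjoint
  rw [← ContinuousLinearMap.star_eq_adjoint]
  have hstar : star S = A - Complex.I • C := by
    rw [hSdec, star_add, star_smul, hA', hC']
    simp [sub_eq_add_neg, Complex.conj_I, neg_smul]
  have hcomm : star S * S - S * star S = (2 * Complex.I) • (A * C - C * A) := by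
    rw [hstar, hSdec]
    simp only [sub_mul, mul_sub, add_mul, mul_add, smul_mul_assoc, mul_smul_comm, smul_smul,
      Complex.I_mul_I]
    module
  rw [hcomm]
  set a := A - algebraMap ℝ (H →L[ℂ] H) (‖A‖ / 2) with ha_def
  set c := C - algebraMap ℝ (H →L[ℂ] H) (‖C‖ / 2) with hc_def
  have hac : A * C - C * A = a * c - c * a := by
    rw [ha_def, hc_def]
    simp only [sub_mul, mul_sub, Algebra.algebraMap_eq_smul_one, smul_mul_assoc, mul_smul_comm,
      one_mul, mul_one, smul_smul]
    module
  rw [hac, norm_smul]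
  have hna : ‖a‖ ≤ ‖A‖ / 2 := positive_shift_norm_le A hA
  have hnc : ‖c‖ ≤ ‖C‖ / 2 := positive_shift_norm_le C hC
  have h1 : ‖a * c - c * a‖ ≤ 2 * (‖A‖/2) * (‖C‖/2) := by
    calc ‖a * c - c * a‖ ≤ ‖a * c‖ + ‖c * a‖ := norm_sub_le _ _
      _ ≤ ‖a‖ * ‖c‖ + ‖c‖ * ‖a‖ := add_le_add (norm_mul_le _ _) (norm_mul_le _ _)
      _ ≤ (‖A‖/2) * (‖C‖/2) + (‖C‖/2) * (‖A‖/2) := by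
          exact add_le_add (mul_le_mul hna hnc (norm_nonneg _) (by positivity))
            (mul_le_mul hnc hna (norm_nonneg _) (by positivity))
      _ = 2 * (‖A‖/2) * (‖C‖/2) := by ring
  have h2 : ‖(2 * Complex.I : ℂ)‖ = 2 := by simp
  rw [h2]
  nlinarith [sq_nonneg (‖A‖ - ‖C‖), norm_nonneg (a*c - c*a)]
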